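/- Let P be an idempotent operator on a finite-dimensional inner product space H, W = im P, W* = (ker P)ᗮ. Then P = P' + π, where π is the orthogonal projection onto W ∩ W*, and P' is an idempotent with P'π = πP' = 0 whose operator P'*P' has all nonzero eigenvalues strictly greater than 1. -/

import Mathlib

open scoped InnerProductSpace

theorem stmt_6 {𝕜 E : Type*} [RCLike 𝕜] [NormedAddCommGroup E]
    [InnerProductSpace 𝕜 E] [FiniteDimensional 𝕜 E]
    (P : E →ₗ[𝕜] E) (hP : P ∘ₗ P = P) :
    ∃ P' : E →ₗ[𝕜] E,
      let W : Submodule 𝕜 E := LinearMap.range P ⊓ (LinearMap.ker P)ᗮ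
      let π : E →ₗ[𝕜] E := W.subtype ∘ₗ (W.orthogonalProjectionOnto).toLinearMap
      P = P' + π ∧ P' ∘ₗ P' = P' ∧ P' ∘ₗ π = 0 ∧ π ∘ₗ P' = 0 ∧
      (∀ μ : ℝ, μ ≠ 0 →
        Module.End.HasEigenvalue ((LinearMap.adjoint P') ∘ₗ P') ((μ : ℝ) : 𝕜) →
        1 < μ) := by
  set W : Submodule 𝕜 E := LinearMap.range P ⊓ (LinearMap.ker P)ᗮ with hWdef
  set π : E →ₗ[𝕜] E := W.subtype ∘ₗ (W.orthogonalProjectionOnto).toLinearMap with hπdef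
  have hPP : ∀ x, P (P x) = P x := fun x => DFunLike.congr_fun hP x
  have hPfix : ∀ x ∈ LinearMap.range P, P x = x := by
    rintro x ⟨y, rfl⟩; exact hPP y
  have hπmem : ∀ x, π x ∈ W := fun x => SetLike.coe_mem (W.orthogonalProjectionOnto x)
  have hPπ : P ∘ₗ π = π := by
    ext x
    exact hPfix _ (hπmem x).1
  have hkerle : LinearMap.ker P ≤ Wᗮ := by
    have h1 : W ≤ (LinearMap.ker P)ᗮ := inf_le_right
    exact (Submodule.le_orthogonal_orthogonal _).trans (Submodule.orthogonal_le h1)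
  have hπP : π ∘ₗ P = π := by
    ext x
    have hk : P x - x ∈ LinearMap.ker P := by
      rw [LinearMap.mem_ker, map_sub, hPP, sub_self]
    have ho : W.orthogonalProjectionOnto (P x - x) = 0 :=
      Submodule.orthogonalProjectionOnto_apply_of_mem_orthogonal (hkerle hk)
    have h0 : π (P x - x) = 0 := by
      rw [hπdef]
      simp only [LinearMap.comp_apply, ContinuousLinearMap.coe_coe, ho]
      simp
    rw [map_sub] at h0
    simpa [sub_eq_zero] using h0
  have hππ : π ∘ₗ π = π := by
    ext x
    simp only [hπdef, LinearMap.comp_apply, ContinuousLinearMap.coe_coe,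
      Submodule.coe_subtype, Submodule.orthogonalProjectionOnto_mem_subspace_eq_self]
  have hπadj : LinearMap.adjoint π = π := by
    symm
    rw [LinearMap.eq_adjoint_iff]
    intro x y
    exact W.starProjection_isSymmetric x y
  have hA2 : (P - π) ∘ₗ (P - π) = P - π := by
    simp only [LinearMap.comp_sub, LinearMap.sub_comp, hP, hPπ, hπP, hππ]
    abel
  have hAπ : (P - π) ∘ₗ π = 0 := by
    simp only [LinearMap.sub_comp, hPπ, hππ, sub_self]
  have hπA : π ∘ₗ (P - π) = 0 := by
    simp only [LinearMap.comp_sub, hπP, hππ, sub_self]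
  have heig : ∀ μ : ℝ, μ ≠ 0 →
      Module.End.HasEigenvalue ((LinearMap.adjoint (P - π)) ∘ₗ (P - π)) ((μ : ℝ) : 𝕜) →
      1 < μ := by
    intro μ hμ hev
    set A : E →ₗ[𝕜] E := P - π with hAdef
    set B : E →ₗ[𝕜] E := LinearMap.adjoint A with hBdef
    obtain ⟨x, hx⟩ := hev.exists_hasEigenvector
    have hx0 : x ≠ 0 := hx.right
    have hμ𝕜 : ((μ : ℝ) : 𝕜) ≠ 0 := RCLike.ofReal_ne_zero.mpr hμ
    have hBAx : B (A x) = ((μ : ℝ) : 𝕜) • x := hx.apply_eq_smul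
    have hBB : B ∘ₗ B = B := by
      rw [hBdef, ← LinearMap.adjoint_comp, hA2]
    have hBx : B x = x := by
      have h1 : B (B (A x)) = B (A x) := DFunLike.congr_fun hBB (A x)
      rw [hBAx, map_smul] at h1
      exact smul_right_injective E hμ𝕜 h1
    have hxx : ⟪x, A x⟫_𝕜 = ⟪x, x⟫_𝕜 := by
      rw [← LinearMap.adjoint_inner_left A x x, ← hBdef, hBx]
    have hAxx : ⟪A x, x⟫_𝕜 = ⟪x, x⟫_𝕜 := by
      rw [← inner_conj_symm (A x) x, hxx, inner_conj_symm]
    have hAA : ⟪A x, A x⟫_𝕜 = ((μ : ℝ) : 𝕜) * ⟪x, x⟫_𝕜 := by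
      rw [← LinearMap.adjoint_inner_right A x (A x), ← hBdef, hBAx, inner_smul_right]
    have hsub : ⟪A x - x, A x - x⟫_𝕜 = (((μ : ℝ) : 𝕜) - 1) * ⟪x, x⟫_𝕜 := by
      rw [inner_sub_left, inner_sub_right, inner_sub_right, hAA, hxx, hAxx]
      ring
    have hre : (‖A x - x‖ : ℝ) ^ 2 = (μ - 1) * ‖x‖ ^ 2 := by
      have h := hsub
      rw [inner_self_eq_norm_sq_to_K, inner_self_eq_norm_sq_to_K] at h
      exact_mod_cast h
    have hxpos : 0 < ‖x‖ ^ 2 := pow_pos (norm_pos_iff.mpr hx0) 2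
    have h1le : 1 ≤ μ := by nlinarith [sq_nonneg ‖A x - x‖]
    rcases h1le.lt_or_eq with h | h
    · exact h
    · exfalso
      have hAx : A x = x := by
        have h0 : ‖A x - x‖ ^ 2 = 0 := by rw [hre, ← h]; ring
        have h1 : A x - x = 0 := by
          have := pow_eq_zero_iff two_ne_zero |>.mp h0
          exact norm_eq_zero.mp this
        exact sub_eq_zero.mp h1
      have hπx : π x = 0 := by
        have h1 : π (A x) = 0 := DFunLike.congr_fun hπA x
        rwa [hAx] at h1
      have hPx : P x = x := by
        have h1 : P x - π x = x := hAx
        rwa [hπx, sub_zero] at h1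
      have hPadjx : LinearMap.adjoint P x = x := by
        have hBadj : B = LinearMap.adjoint P - π := by
          rw [hBdef, hAdef, map_sub, hπadj]
        have h1 : LinearMap.adjoint P x - π x = x := by
          have := hBx
          rw [hBadj] at this
          exact this
        rwa [hπx, sub_zero] at h1
      have hxW : x ∈ W := by
        refine ⟨⟨x, hPx⟩, ?_⟩
        intro u hu
        have h1 : ⟪u, LinearMap.adjoint P x⟫_𝕜 = ⟪P u, x⟫_𝕜 :=
          LinearMap.adjoint_inner_right P u x
        rw [hPadjx, hu, inner_zero_left] at h1
        exact h1
      have hπxx : π x = x := by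
        have h1 : W.orthogonalProjectionOnto ((⟨x, hxW⟩ : W) : E) = ⟨x, hxW⟩ :=
          Submodule.orthogonalProjectionOnto_mem_subspace_eq_self (⟨x, hxW⟩ : W)
        calc π x = ↑(W.orthogonalProjectionOnto x) := rfl
          _ = ((⟨x, hxW⟩ : W) : E) := congrArg _ h1
          _ = x := rfl
      exact hx0 (by rw [← hπxx, hπx])
  exact ⟨P - π, (sub_add_cancel P π).symm, hA2, hAπ, hπA, heig⟩
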